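/- A skew-evolution semiflow C = (φ,Φ) satisfies the discrete exponential instability property (there exist ν > 0 and (a_n) with a_n ≥ 1 such that ‖Φ(n,n₀,x)v‖ ≤ a_m e^{-ν(m-n)} ‖Φ(m,n₀,x)v‖ for all naturals m ≥ n ≥ n₀ and all (x,v)) if and only if there exist a nondecreasing function R : ℝ₊ → ℝ₊ with R(0) = 0 and R(t) > 0 for t > 0, a constant ρ < 0, and a sequence (α_n) with α_n ≥ 1 such that Σ_{k=n}^{m} R(e^{-ρ(m-k)} ‖Φ(k,n,x)v‖) ≤ R(α_m ‖Φ(m,n,x)v‖) for all naturals m ≥ n and all (x,v) ∈ X × V. -/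

import Mathlib

open Real Finset

/-- An evolution semiflow on `X`. -/
def IsEvolutionSemiflow {X : Type*} (φ : ℝ → ℝ → X → X) : Prop :=
  (∀ t x, 0 ≤ t → φ t t x = x) ∧
  ∀ t s t₀ x, 0 ≤ t₀ → t₀ ≤ s → s ≤ t → φ t s (φ s t₀ x) = φ t t₀ x

/-- An evolution cocycle over an evolution semiflow `φ`. -/
def IsEvolutionCocycle {X V : Type*} [NormedAddCommGroup V] [NormedSpace ℝ V]
    (φ : ℝ → ℝ → X → X) (Φ : ℝ → ℝ → X → (V →L[ℝ] V)) : Prop :=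
  (∀ t x, 0 ≤ t → Φ t t x = ContinuousLinearMap.id ℝ V) ∧
  ∀ t s t₀ x, 0 ≤ t₀ → t₀ ≤ s → s ≤ t →
    (Φ t s (φ s t₀ x)).comp (Φ s t₀ x) = Φ t t₀ x

lemma my_geom_sum_le {r : ℝ} (h0 : 0 ≤ r) (h1 : r < 1) (n : ℕ) :
    ∑ i ∈ Finset.range n, r ^ i ≤ (1 - r)⁻¹ := by
  rw [geom_sum_eq (by linarith), div_le_iff_of_neg (by linarith)]
  have h2 : (1-r)⁻¹*(r-1) = -1 := by
    rw [inv_mul_eq_div, div_eq_iff (by linarith : (1:ℝ)-r ≠ 0)]; ring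
  have := pow_nonneg h0 n
  nlinarith

lemma my_geom_sum_Icc_le {r : ℝ} (h0 : 0 ≤ r) (h1 : r < 1) (n m : ℕ) (h : n ≤ m) :
    ∑ k ∈ Finset.Icc n m, r ^ (m - k) ≤ (1 - r)⁻¹ := by
  have h3 : ∑ k ∈ Finset.Icc n m, r ^ (m - k)
      = ∑ j ∈ Finset.range (m + 1 - n), r ^ (m - (n + j)) := by
    rw [← Finset.Ico_add_one_right_eq_Icc, Finset.sum_Ico_eq_sum_range]
  have h4 : ∑ j ∈ Finset.range (m + 1 - n), r ^ (m - (n + j))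
      = ∑ j ∈ Finset.range (m + 1 - n), r ^ j := by
    have := Finset.sum_range_reflect (fun j => r ^ j) (m + 1 - n)
    rw [← this]
    apply Finset.sum_congr rfl
    intro j hj
    simp only [Finset.mem_range] at hj
    congr 1
    omega
  rw [h3, h4]
  exact my_geom_sum_le h0 h1 _

theorem discrete_instable_iff_R_sum
    {X V : Type*} [MetricSpace X] [NormedAddCommGroup V] [NormedSpace ℝ V] [CompleteSpace V]
    (φ : ℝ → ℝ → X → X) (Φ : ℝ → ℝ → X → (V →L[ℝ] V))
    (hφ : IsEvolutionSemiflow φ) (hΦ : IsEvolutionCocycle φ Φ) :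
    (∃ ν > (0:ℝ), ∃ a : ℕ → ℝ, (∀ n, 1 ≤ a n) ∧
      ∀ m n n₀ : ℕ, n₀ ≤ n → n ≤ m → ∀ (x : X) (v : V),
        ‖Φ n n₀ x v‖ ≤ a m * Real.exp (-ν * ((m : ℝ) - (n : ℝ))) * ‖Φ m n₀ x v‖) ↔
    (∃ R : ℝ → ℝ, Monotone R ∧ R 0 = 0 ∧ (∀ t > (0:ℝ), 0 < R t) ∧
      ∃ ρ < (0:ℝ), ∃ α : ℕ → ℝ, (∀ n, 1 ≤ α n) ∧
        ∀ m n : ℕ, n ≤ m → ∀ (x : X) (v : V),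
          ∑ k ∈ Finset.Icc n m,
              R (Real.exp (-ρ * ((m : ℝ) - (k : ℝ))) * ‖Φ k n x v‖) ≤
            R (α m * ‖Φ m n x v‖)) := by
  constructor
  · rintro ⟨ν, hν, a, ha1, ha⟩
    set r : ℝ := Real.exp (-(ν/2)) with hr
    have hr0 : 0 < r := Real.exp_pos _
    have hr1 : r < 1 := by
      rw [hr]
      have : -(ν/2) < 0 := by linarith
      calc Real.exp (-(ν/2)) < Real.exp 0 := Real.exp_lt_exp.mpr this
        _ = 1 := Real.exp_zero
    have hinv1 : (1:ℝ) ≤ (1 - r)⁻¹ := by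
      rw [le_inv_comm₀ one_pos (by linarith)]
      simp; linarith
    refine ⟨id, monotone_id, rfl, fun t ht => ht, -(ν/2), by linarith,
      fun m => a m * (1 - r)⁻¹, fun n => one_le_mul_of_one_le_of_one_le (ha1 n) hinv1, ?_⟩
    intro m n hnm x v
    simp only [id]
    set N := ‖Φ m n x v‖ with hN
    have hN0 : 0 ≤ N := norm_nonneg _
    calc ∑ k ∈ Finset.Icc n m,
          Real.exp (-(-(ν/2)) * ((m:ℝ) - (k:ℝ))) * ‖Φ k n x v‖
        ≤ ∑ k ∈ Finset.Icc n m, a m * r ^ (m - k) * N := by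
          apply Finset.sum_le_sum
          intro k hk
          simp only [Finset.mem_Icc] at hk
          have hΔ : ((m - k : ℕ) : ℝ) = (m:ℝ) - (k:ℝ) := by
            push_cast [Nat.cast_sub hk.2]; ring
          have hb := ha m k n hk.1 hk.2 x v
          have hexp : (0:ℝ) < Real.exp (-(-(ν/2)) * ((m:ℝ) - (k:ℝ))) := Real.exp_pos _
          calc Real.exp (-(-(ν/2)) * ((m:ℝ) - (k:ℝ))) * ‖Φ k n x v‖
              ≤ Real.exp (-(-(ν/2)) * ((m:ℝ) - (k:ℝ))) *
                  (a m * Real.exp (-ν * ((m:ℝ) - (k:ℝ))) * N) :=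
                mul_le_mul_of_nonneg_left hb hexp.le
            _ = a m * Real.exp (-(-(ν/2)) * ((m:ℝ)-(k:ℝ)) + -ν * ((m:ℝ)-(k:ℝ))) * N := by
                rw [Real.exp_add]; ring
            _ = a m * Real.exp (((m - k : ℕ):ℝ) * (-(ν/2))) * N := by
                rw [hΔ]; ring_nf
            _ = a m * r ^ (m - k) * N := by
                rw [Real.exp_nat_mul]
      _ = a m * N * ∑ k ∈ Finset.Icc n m, r ^ (m - k) := by
          rw [Finset.mul_sum]
          apply Finset.sum_congr rfl
          intros; ring
      _ ≤ a m * N * (1-r)⁻¹ := by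
          apply mul_le_mul_of_nonneg_left (my_geom_sum_Icc_le hr0.le hr1 n m hnm)
          have h1 : (0:ℝ) ≤ a m := le_trans zero_le_one (ha1 m)
          positivity
      _ = a m * (1-r)⁻¹ * N := by ring
  · rintro ⟨R, hRmono, hR0, hRpos, ρ, hρ, α, hα1, hsum⟩
    refine ⟨-ρ, by linarith, α, hα1, ?_⟩
    intro m n n₀ hn₀ hnm x v
    have hcast₀ : (0:ℝ) ≤ (n₀:ℕ) := Nat.cast_nonneg _
    -- cocycle identity: Φ k n (φ n n₀ x) (Φ n n₀ x v) = Φ k n₀ x v for n ≤ k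
    have hcoc : ∀ k : ℕ, n ≤ k →
        Φ k n (φ n n₀ x) (Φ n n₀ x v) = Φ k n₀ x v := by
      intro k hk
      have := hΦ.2 (k:ℝ) (n:ℝ) (n₀:ℝ) x (Nat.cast_nonneg _)
        (by exact_mod_cast hn₀) (by exact_mod_cast hk)
      calc Φ k n (φ n n₀ x) (Φ n n₀ x v)
          = ((Φ k n (φ n n₀ x)).comp (Φ n n₀ x)) v := rfl
        _ = Φ k n₀ x v := by rw [this]
    set N : ℕ → ℝ := fun k => ‖Φ k n₀ x v‖ with hNdef
    have hNnn : ∀ k : ℕ, 0 ≤ N k := fun k => norm_nonneg _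
    have key := hsum m n hnm (φ n n₀ x) (Φ n n₀ x v)
    have key' : ∑ k ∈ Finset.Icc n m,
        R (Real.exp (-ρ * ((m:ℝ) - (k:ℝ))) * N k) ≤ R (α m * N m) := by
      have e1 : ∀ k ∈ Finset.Icc n m,
          R (Real.exp (-ρ * ((m:ℝ) - (k:ℝ))) * ‖Φ k n (φ n n₀ x) (Φ n n₀ x v)‖)
          = R (Real.exp (-ρ * ((m:ℝ) - (k:ℝ))) * N k) := by
        intro k hk
        simp only [Finset.mem_Icc] at hk
        rw [hcoc k hk.1]
      rw [Finset.sum_congr rfl e1] at key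
      rw [hcoc m hnm] at key
      exact key
    have hRnonneg : ∀ t : ℝ, 0 ≤ t → 0 ≤ R t := by
      intro t ht; rw [← hR0]; exact hRmono ht
    have htermnn : ∀ k : ℕ, 0 ≤ R (Real.exp (-ρ * ((m:ℝ) - (k:ℝ))) * N k) :=
      fun k => hRnonneg _ (mul_nonneg (Real.exp_pos _).le (hNnn k))
    show N n ≤ α m * Real.exp (-(-ρ) * ((m:ℝ) - (n:ℝ))) * N m
    rcases eq_or_lt_of_le hnm with heq | hlt
    · -- m = n
      subst heq
      have h1 : Real.exp (-(-ρ) * ((n:ℝ) - (n:ℝ))) = 1 := by simp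
      rw [h1]
      nlinarith [hNnn n, hα1 n]
    rcases eq_or_lt_of_le (hNnn m) with hm0 | hm0
    · -- N m = 0
      have hsum0 : ∑ k ∈ Finset.Icc n m,
          R (Real.exp (-ρ * ((m:ℝ) - (k:ℝ))) * N k) ≤ 0 := by
        calc _ ≤ R (α m * N m) := key'
          _ = 0 := by rw [← hm0, mul_zero, hR0]
      have hterm0 : R (Real.exp (-ρ * ((m:ℝ) - (n:ℝ))) * N n) = 0 := by
        have hmem : n ∈ Finset.Icc n m := by simp [hnm]
        have hle := Finset.single_le_sum (f := fun (k : ℕ) =>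
          R (Real.exp (-ρ * ((m:ℝ) - (k:ℝ))) * N k))
          (fun k _ => htermnn k) hmem
        have hge := htermnn n
        linarith
      have hNn : N n = 0 := by
        by_contra h
        have hpos : 0 < N n := lt_of_le_of_ne (hNnn n) (Ne.symm h)
        have : 0 < R (Real.exp (-ρ * ((m:ℝ) - (n:ℝ))) * N n) :=
          hRpos _ (mul_pos (Real.exp_pos _) hpos)
        linarith
      rw [hNn, ← hm0, mul_zero]
    · -- N m > 0
      by_contra hcontra
      push_neg at hcontra
      have hstep : R (Real.exp (-ρ * ((m:ℝ) - (n:ℝ))) * N n) + R (N m)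
          ≤ R (α m * N m) := by
        have hsub : ({n, m} : Finset ℕ) ⊆ Finset.Icc n m := by
          intro k hk
          simp only [Finset.mem_insert, Finset.mem_singleton] at hk
          rcases hk with rfl | rfl <;> simp [hnm]
        have hpair := Finset.sum_pair (f := fun (k : ℕ) =>
          R (Real.exp (-ρ * ((m:ℝ) - (k:ℝ))) * N k)) (Nat.ne_of_lt hlt)
        have hle := Finset.sum_le_sum_of_subset_of_nonneg hsub
          (f := fun (k : ℕ) => R (Real.exp (-ρ * ((m:ℝ) - (k:ℝ))) * N k))
          (fun k _ _ => htermnn k)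
        rw [hpair] at hle
        beta_reduce at hle
        have hexp1 : Real.exp (-ρ * ((m:ℝ) - (m:ℝ))) = 1 := by simp
        rw [hexp1, one_mul] at hle
        linarith [key']
      have hRm : 0 < R (N m) := hRpos _ hm0
      have hmul : α m * N m ≤ Real.exp (-ρ * ((m:ℝ) - (n:ℝ))) * N n := by
        have hE : 0 < Real.exp (-ρ * ((m:ℝ) - (n:ℝ))) := Real.exp_pos _
        have hE' : Real.exp (-(-ρ) * ((m:ℝ) - (n:ℝ)))
            = (Real.exp (-ρ * ((m:ℝ) - (n:ℝ))))⁻¹ := by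
          rw [← Real.exp_neg]; ring_nf
        rw [hE'] at hcontra
        have h2 := mul_lt_mul_of_pos_left hcontra hE
        have h3 : Real.exp (-ρ * ((m:ℝ) - (n:ℝ))) *
            (α m * (Real.exp (-ρ * ((m:ℝ) - (n:ℝ))))⁻¹ * N m) = α m * N m := by
          field_simp
        rw [h3] at h2
        exact h2.le
      have := hRmono hmul
      linarith
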